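/- arXiv:2404.18699 — 2 statements merged into one kernel-verified Lean document; each statement's English description precedes it below -/
import Mathlib

section
/- Let π be a probability density on ℝⁿ supported in a ball of radius r. Define p_ν = π * N(0, ν² I). If ν > r, then -log p_ν is convex on ℝⁿ. (In particular, for ν sufficiently large the smoothed negative log-likelihood is convex.) -/
open scoped Real

section AuxiliaryLemmas
open MeasureTheory Real

lemma key_glob {α : Type*} [MeasurableSpace α] {μ : Measure α}
    (f X : α → ℝ) (m : ℝ) (hm0 : 0 ≤ m)
    (hf : Integrable f μ) (hf0 : ∀ y, 0 ≤ f y)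
    (hX : Measurable X) (hXm : ∀ y, |X y| ≤ m)
    (hpos : 0 < ∫ y, f y ∂μ)
    (s : ℝ) (hs0 : 0 ≤ s) (hs1 : s ≤ 1) :
    (∫ y, f y ∂μ) ^ (1 - s) * (∫ y, f y * Real.exp (X y) ∂μ) ^ s
      * Real.exp (-(s * (1 - s) * m ^ 2 / 2)) ≤ ∫ y, f y * Real.exp (s * X y) ∂μ := by
  have meas : ∀ (t : ℝ) (k : ℕ),
      AEStronglyMeasurable (fun y => f y * (X y ^ k * Real.exp (t * X y))) μ := by
    intro t k
    exact hf.aestronglyMeasurable.mul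
      (((hX.pow_const k).mul ((measurable_const.mul hX).exp)).aestronglyMeasurable)
  have bnd : ∀ (t : ℝ) (y : α), t * X y ≤ |t| * m := by
    intro t y
    calc t * X y ≤ |t * X y| := le_abs_self _
    _ = |t| * |X y| := abs_mul _ _
    _ ≤ |t| * m := mul_le_mul_of_nonneg_left (hXm y) (abs_nonneg t)
  have int_aux : ∀ (t : ℝ) (k : ℕ),
      Integrable (fun y => f y * (X y ^ k * Real.exp (t * X y))) μ := by
    intro t k
    refine Integrable.mono' (g := fun y => f y * (m ^ k * Real.exp (|t| * m)))
      (hf.mul_const _) (meas t k) (Filter.Eventually.of_forall fun y => ?_)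
    rw [Real.norm_eq_abs, abs_mul, abs_of_nonneg (hf0 y)]
    refine mul_le_mul_of_nonneg_left ?_ (hf0 y)
    rw [abs_mul, abs_pow, Real.abs_exp]
    exact mul_le_mul (pow_le_pow_left₀ (abs_nonneg _) (hXm y) k)
      (Real.exp_le_exp.2 (bnd t y)) (Real.exp_pos _).le (by positivity)
  have int_exp : ∀ t : ℝ, Integrable (fun y => f y * Real.exp (t * X y)) μ := by
    intro t
    simpa using int_aux t 0
  set H : ℝ → ℝ := fun t => ∫ y, f y * Real.exp (t * X y) ∂μ with hH_def
  set H1 : ℝ → ℝ := fun t => ∫ y, f y * (X y * Real.exp (t * X y)) ∂μ with hH1_def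
  set H2 : ℝ → ℝ := fun t => ∫ y, f y * (X y ^ 2 * Real.exp (t * X y)) ∂μ with hH2_def
  have Hpos : ∀ t, 0 < H t := by
    intro t
    calc (0:ℝ) < Real.exp (-(|t| * m)) * ∫ y, f y ∂μ := by positivity
    _ = ∫ y, Real.exp (-(|t| * m)) * f y ∂μ := (integral_const_mul _ _).symm
    _ ≤ H t := by
      refine integral_mono (hf.const_mul _) (int_exp t) fun y => ?_
      rw [mul_comm]
      refine mul_le_mul_of_nonneg_left (Real.exp_le_exp.2 ?_) (hf0 y)
      have := bnd (-t) y
      rw [abs_neg, neg_mul] at this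
      linarith
  have hH : ∀ t, HasDerivAt H (H1 t) t := by
    intro t₀
    have := (hasDerivAt_integral_of_dominated_loc_of_deriv_le (s := Metric.ball t₀ 1) (Metric.ball_mem_nhds t₀ one_pos)
      (F := fun t y => f y * Real.exp (t * X y))
      (F' := fun t y => f y * (X y * Real.exp (t * X y)))
      (bound := fun y => f y * (m * Real.exp ((|t₀| + 1) * m)))
      (Filter.Eventually.of_forall fun t => (int_exp t).aestronglyMeasurable)
      (int_exp t₀) (by simpa using meas t₀ 1)
      (Filter.Eventually.of_forall fun y => ?_)
      (hf.mul_const _)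
      (Filter.Eventually.of_forall fun y => ?_)).2
    · exact this
    · intro t ht
      rw [Real.norm_eq_abs, abs_mul, abs_of_nonneg (hf0 y), abs_mul, Real.abs_exp]
      refine mul_le_mul_of_nonneg_left (mul_le_mul (hXm y) (Real.exp_le_exp.2 ?_)
        (Real.exp_pos _).le hm0) (hf0 y)
      have h1 : |t| ≤ |t₀| + 1 := by
        have := Metric.mem_ball.1 ht
        rw [Real.dist_eq] at this
        have := abs_sub_abs_le_abs_sub t t₀
        linarith
      calc t * X y ≤ |t| * m := bnd t y
      _ ≤ (|t₀| + 1) * m := mul_le_mul_of_nonneg_right h1 hm0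
    · intro t ht
      have h := ((hasDerivAt_mul_const (X y)).exp).const_mul (f y) (x := t)
      simpa [mul_comm, mul_assoc, mul_left_comm] using h
  have hH1 : ∀ t, HasDerivAt H1 (H2 t) t := by
    intro t₀
    have := (hasDerivAt_integral_of_dominated_loc_of_deriv_le (s := Metric.ball t₀ 1) (Metric.ball_mem_nhds t₀ one_pos)
      (F := fun t y => f y * (X y * Real.exp (t * X y)))
      (F' := fun t y => f y * (X y ^ 2 * Real.exp (t * X y)))
      (bound := fun y => f y * (m ^ 2 * Real.exp ((|t₀| + 1) * m)))
      (Filter.Eventually.of_forall fun t => by simpa using meas t 1)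
      (by simpa using int_aux t₀ 1) (meas t₀ 2)
      (Filter.Eventually.of_forall fun y => ?_)
      (hf.mul_const _)
      (Filter.Eventually.of_forall fun y => ?_)).2
    · exact this
    · intro t ht
      rw [Real.norm_eq_abs, abs_mul, abs_of_nonneg (hf0 y), abs_mul, Real.abs_exp, abs_pow]
      refine mul_le_mul_of_nonneg_left (mul_le_mul
        (pow_le_pow_left₀ (abs_nonneg _) (hXm y) 2) (Real.exp_le_exp.2 ?_)
        (Real.exp_pos _).le (by positivity)) (hf0 y)
      have h1 : |t| ≤ |t₀| + 1 := by
        have := Metric.mem_ball.1 ht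
        rw [Real.dist_eq] at this
        have := abs_sub_abs_le_abs_sub t t₀
        linarith
      calc t * X y ≤ |t| * m := bnd t y
      _ ≤ (|t₀| + 1) * m := mul_le_mul_of_nonneg_right h1 hm0
    · intro t ht
      have h := ((hasDerivAt_mul_const (X y)).exp).const_mul (f y * X y) (x := t)
      have : HasDerivAt (fun t => f y * (X y * Real.exp (t * X y)))
          (f y * X y * (Real.exp (t * X y) * X y)) t := by
        refine h.congr_of_eventuallyEq (Filter.Eventually.of_forall fun u => ?_)
        ring
      refine this.congr_deriv ?_
      ring
  have hH2le : ∀ t, H2 t ≤ m ^ 2 * H t := by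
    intro t
    calc H2 t ≤ ∫ y, m ^ 2 * (f y * Real.exp (t * X y)) ∂μ := by
          refine integral_mono (int_aux t 2) ((int_exp t).const_mul _) fun y => ?_
          have hx2 : X y ^ 2 ≤ m ^ 2 := by
            rw [← sq_abs]
            exact pow_le_pow_left₀ (abs_nonneg _) (hXm y) 2
          have heq : f y * (X y ^ 2 * Real.exp (t * X y))
              = X y ^ 2 * (f y * Real.exp (t * X y)) := by ring
          rw [heq]
          exact mul_le_mul_of_nonneg_right hx2
            (mul_nonneg (hf0 y) (Real.exp_pos _).le)
    _ = m ^ 2 * H t := integral_const_mul _ _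
  -- the convex function
  set k : ℝ → ℝ := fun t => m ^ 2 * t ^ 2 / 2 - Real.log (H t) with hk_def
  have hk' : ∀ t, HasDerivAt k (m ^ 2 * t - H1 t / H t) t := by
    intro t
    have h1 : HasDerivAt (fun t : ℝ => m ^ 2 * t ^ 2 / 2) (m ^ 2 * t) t := by
      have := ((hasDerivAt_pow 2 t).const_mul (m ^ 2)).div_const 2
      refine this.congr_deriv ?_
      push_cast
      ring
    have h2 : HasDerivAt (fun t => Real.log (H t)) ((H t)⁻¹ * H1 t) t :=
      (Real.hasDerivAt_log (Hpos t).ne').comp t (hH t)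
    have := h1.sub h2
    refine this.congr_deriv ?_
    rw [div_eq_inv_mul]
  have hk'' : ∀ t, HasDerivAt (fun t => m ^ 2 * t - H1 t / H t)
      (m ^ 2 - (H2 t * H t - H1 t * H1 t) / H t ^ 2) t := by
    intro t
    have h1 : HasDerivAt (fun t : ℝ => m ^ 2 * t) (m ^ 2) t := by
      simpa using (hasDerivAt_id t).const_mul (m ^ 2)
    exact h1.sub ((hH1 t).div (hH t) (Hpos t).ne')
  have hconv : ConvexOn ℝ Set.univ k := by
    refine convexOn_of_hasDerivWithinAt2_nonneg convex_univ
      (f' := fun t => m ^ 2 * t - H1 t / H t)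
      (f'' := fun t => m ^ 2 - (H2 t * H t - H1 t * H1 t) / H t ^ 2)
      (Differentiable.continuous fun t => (hk' t).differentiableAt).continuousOn
      (fun t _ => (hk' t).hasDerivWithinAt) (fun t _ => (hk'' t).hasDerivWithinAt)
      (fun t _ => ?_)
    have h2 : H2 t * H t - H1 t * H1 t ≤ m ^ 2 * H t ^ 2 := by
      have := hH2le t
      have := Hpos t
      nlinarith [sq_nonneg (H1 t)]
    have hHt2 : (0:ℝ) < H t ^ 2 := pow_pos (Hpos t) 2
    have := (div_le_iff₀ hHt2).2 h2
    linarith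
  -- conclude
  have hcomb := hconv.2 (Set.mem_univ (0:ℝ)) (Set.mem_univ (1:ℝ))
    (by linarith : (0:ℝ) ≤ 1 - s) hs0 (by ring)
  simp only [smul_eq_mul, mul_zero, mul_one, zero_add] at hcomb
  -- hcomb : k s ≤ (1 - s) * k 0 + s * k 1
  have hH0 : H 0 = ∫ y, f y ∂μ := by
    simp [hH_def]
  have hH1v : H 1 = ∫ y, f y * Real.exp (X y) ∂μ := by
    simp [hH_def]
  have hlog : (1 - s) * Real.log (H 0) + s * Real.log (H 1)
      - s * (1 - s) * m ^ 2 / 2 ≤ Real.log (H s) := by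
    simp only [hk_def] at hcomb
    nlinarith [hcomb]
  calc (∫ y, f y ∂μ) ^ (1 - s) * (∫ y, f y * Real.exp (X y) ∂μ) ^ s
      * Real.exp (-(s * (1 - s) * m ^ 2 / 2))
      = Real.exp ((1 - s) * Real.log (H 0) + s * Real.log (H 1)
        - s * (1 - s) * m ^ 2 / 2) := by
        rw [← hH0, ← hH1v, Real.rpow_def_of_pos (Hpos 0), Real.rpow_def_of_pos (Hpos 1),
          ← Real.exp_add, ← Real.exp_add]
        ring_nf
  _ ≤ Real.exp (Real.log (H s)) := Real.exp_le_exp.2 hlog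
  _ = H s := Real.exp_log (Hpos s)

lemma key_supp {α : Type*} [MeasurableSpace α] {μ : Measure α}
    (f X : α → ℝ) (m : ℝ) (hm0 : 0 ≤ m)
    (hf : Integrable f μ) (hf0 : ∀ y, 0 ≤ f y)
    (hX : Measurable X) (hXm : ∀ y, f y ≠ 0 → |X y| ≤ m)
    (hpos : 0 < ∫ y, f y ∂μ)
    (s : ℝ) (hs0 : 0 ≤ s) (hs1 : s ≤ 1) :
    (∫ y, f y ∂μ) ^ (1 - s) * (∫ y, f y * Real.exp (X y) ∂μ) ^ s
      * Real.exp (-(s * (1 - s) * m ^ 2 / 2)) ≤ ∫ y, f y * Real.exp (s * X y) ∂μ := by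
  set X' : α → ℝ := fun y => max (-m) (min m (X y)) with hX'_def
  have hXeq : ∀ (t : ℝ) (y : α), f y * Real.exp (t * X y) = f y * Real.exp (t * X' y) := by
    intro t y
    rcases eq_or_ne (f y) 0 with h | h
    · rw [h, zero_mul, zero_mul]
    · have hb := abs_le.1 (hXm y h)
      have : X' y = X y := by
        rw [hX'_def]
        simp only
        rw [min_eq_right hb.2, max_eq_right hb.1]
      rw [this]
  have h1 : (fun y => f y * Real.exp (X y)) = fun y => f y * Real.exp (X' y) := by
    funext y
    simpa using hXeq 1 y
  have h2 : (fun y => f y * Real.exp (s * X y)) = fun y => f y * Real.exp (s * X' y) := by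
    funext y
    exact hXeq s y
  rw [h1, h2]
  refine key_glob f X' m hm0 hf hf0 (measurable_const.max (measurable_const.min hX)) (fun y => ?_)
    hpos s hs0 hs1
  rw [abs_le]
  constructor
  · exact le_max_left _ _
  · exact max_le (neg_le_self hm0) (min_le_left _ _)

end AuxiliaryLemmas

open MeasureTheory in
open scoped RealInnerProductSpace in
theorem stmt_10 (n : ℕ) (π' : EuclideanSpace ℝ (Fin n) → ℝ)
    (hπ0 : ∀ x, 0 ≤ π' x)
    (hπ1 : ∫ x, π' x = 1)
    (r : ℝ) (hr : 0 ≤ r)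
    (hsupp : Function.support π' ⊆ Metric.closedBall 0 r)
    (ν : ℝ) (hν : r < ν)
    (p : EuclideanSpace ℝ (Fin n) → ℝ)
    (hp : ∀ x, p x = ∫ y, π' y *
      ((2 * π * ν ^ 2) ^ (-(n : ℝ) / 2) * Real.exp (-‖x - y‖ ^ 2 / (2 * ν ^ 2)))) :
    ConvexOn ℝ Set.univ (fun x => -Real.log (p x)) := by
  have hν0 : 0 < ν := lt_of_le_of_lt hr hν
  have hν2 : (0:ℝ) < ν ^ 2 := by positivity
  set c : ℝ := (2 * π * ν ^ 2) ^ (-(n : ℝ) / 2) with hc_def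
  have hc : 0 < c := Real.rpow_pos_of_pos (by positivity) _
  have hπint : Integrable π' := by
    by_contra h
    rw [MeasureTheory.integral_undef h] at hπ1
    exact one_ne_zero hπ1.symm
  have hgcont : ∀ x : EuclideanSpace ℝ (Fin n),
      Continuous (fun y : EuclideanSpace ℝ (Fin n) =>
        c * Real.exp (-‖x - y‖ ^ 2 / (2 * ν ^ 2))) := by
    intro x
    fun_prop
  have hg0 : ∀ (x y : EuclideanSpace ℝ (Fin n)),
      0 < c * Real.exp (-‖x - y‖ ^ 2 / (2 * ν ^ 2)) := by
    intro x y
    positivity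
  have hInt : ∀ x : EuclideanSpace ℝ (Fin n),
      Integrable (fun y => π' y * (c * Real.exp (-‖x - y‖ ^ 2 / (2 * ν ^ 2)))) := by
    intro x
    refine Integrable.mono' (hπint.mul_const c)
      (hπint.aestronglyMeasurable.mul (hgcont x).aestronglyMeasurable)
      (Filter.Eventually.of_forall fun y => ?_)
    rw [Real.norm_eq_abs, abs_mul, abs_of_nonneg (hπ0 y), abs_of_nonneg (hg0 x y).le]
    refine mul_le_mul_of_nonneg_left ?_ (hπ0 y)
    nth_rewrite 2 [show c = c * 1 by ring]
    refine mul_le_mul_of_nonneg_left (Real.exp_le_one_iff.2 ?_) hc.le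
    have : (0:ℝ) ≤ ‖x - y‖ ^ 2 / (2 * ν ^ 2) := by positivity
    rw [neg_div]
    linarith
  have hppos : ∀ x, 0 < p x := by
    intro x
    rw [hp x]
    have h0 : ∀ y, 0 ≤ π' y * (c * Real.exp (-‖x - y‖ ^ 2 / (2 * ν ^ 2))) :=
      fun y => mul_nonneg (hπ0 y) (hg0 x y).le
    rcases (integral_nonneg (f := fun y => π' y * (c * Real.exp (-‖x - y‖ ^ 2 / (2 * ν ^ 2)))) h0).lt_or_eq with h | h
    · exact h
    · exfalso
      have hae := (integral_eq_zero_iff_of_nonneg h0 (hInt x)).1 h.symm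
      have hae' : π' =ᵐ[volume] 0 := by
        filter_upwards [hae] with y hy
        have : π' y * (c * Real.exp (-‖x - y‖ ^ 2 / (2 * ν ^ 2))) = 0 := hy
        rcases mul_eq_zero.1 this with h' | h'
        · exact h'
        · exact absurd h' (hg0 x y).ne'
      rw [integral_congr_ae hae'] at hπ1
      simp at hπ1
  refine ⟨convex_univ, fun x0 _ x1 _ a b ha hb hab => ?_⟩
  simp only [smul_eq_mul]
  have hab' : a = 1 - b := by linarith
  set Δ : EuclideanSpace ℝ (Fin n) := x1 - x0 with hΔ_def
  set X : EuclideanSpace ℝ (Fin n) → ℝ := fun y => ⟪y, Δ⟫ / ν ^ 2 with hX_def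
  set m : ℝ := ‖Δ‖ * r / ν ^ 2 with hm_def
  have hm0 : 0 ≤ m := by positivity
  set A : ℝ → ℝ := fun t => -(t * ⟪x0, Δ⟫ / ν ^ 2) - t ^ 2 * ‖Δ‖ ^ 2 / (2 * ν ^ 2)
    with hA_def
  have hid : ∀ (t : ℝ) (y : EuclideanSpace ℝ (Fin n)),
      π' y * (c * Real.exp (-‖x0 + t • Δ - y‖ ^ 2 / (2 * ν ^ 2)))
      = (π' y * (c * Real.exp (-‖x0 - y‖ ^ 2 / (2 * ν ^ 2))))
        * Real.exp (t * X y) * Real.exp (A t) := by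
    intro t y
    have h1 : x0 + t • Δ - y = (x0 - y) + t • Δ := by abel
    have hnorm : ‖x0 + t • Δ - y‖ ^ 2
        = ‖x0 - y‖ ^ 2 + 2 * (t * (⟪x0, Δ⟫ - ⟪y, Δ⟫)) + t ^ 2 * ‖Δ‖ ^ 2 := by
      rw [h1, norm_add_sq_real, real_inner_smul_right, norm_smul, inner_sub_left]
      rw [Real.norm_eq_abs, mul_pow, sq_abs]
    have hexp : -‖x0 + t • Δ - y‖ ^ 2 / (2 * ν ^ 2)
        = -‖x0 - y‖ ^ 2 / (2 * ν ^ 2) + t * X y + A t := by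
      rw [hnorm, hX_def, hA_def]
      field_simp
      ring
    rw [hexp, Real.exp_add, Real.exp_add]
    ring
  have hpt : ∀ t : ℝ, p (x0 + t • Δ)
      = (∫ y, (π' y * (c * Real.exp (-‖x0 - y‖ ^ 2 / (2 * ν ^ 2))))
          * Real.exp (t * X y)) * Real.exp (A t) := by
    intro t
    rw [hp (x0 + t • Δ)]
    rw [show (fun y => π' y * (c * Real.exp (-‖x0 + t • Δ - y‖ ^ 2 / (2 * ν ^ 2))))
        = fun y => ((π' y * (c * Real.exp (-‖x0 - y‖ ^ 2 / (2 * ν ^ 2))))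
          * Real.exp (t * X y)) * Real.exp (A t) from funext fun y => hid t y]
    exact integral_mul_const _ _
  have hx1 : x0 + (1:ℝ) • Δ = x1 := by rw [one_smul, hΔ_def]; abel
  have hpoint : a • x0 + b • x1 = x0 + b • Δ := by
    rw [hab', hΔ_def]
    module
  -- apply the key lemma
  have hXmeas : Measurable X := by
    rw [hX_def]
    exact ((continuous_id.inner continuous_const).div_const _).measurable
  have hXm : ∀ y, π' y * (c * Real.exp (-‖x0 - y‖ ^ 2 / (2 * ν ^ 2))) ≠ 0 → |X y| ≤ m := by
    intro y hy
    have hπy : π' y ≠ 0 := fun h => hy (by rw [h, zero_mul])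
    have hyr : ‖y‖ ≤ r := by
      have := hsupp hπy
      rwa [Metric.mem_closedBall, dist_zero_right] at this
    rw [hX_def, hm_def]
    simp only
    rw [abs_div, abs_of_pos hν2]
    have h1 : |⟪y, Δ⟫| ≤ ‖Δ‖ * r := by
      calc |⟪y, Δ⟫| ≤ ‖y‖ * ‖Δ‖ := abs_real_inner_le_norm y Δ
      _ ≤ r * ‖Δ‖ := mul_le_mul_of_nonneg_right hyr (norm_nonneg Δ)
      _ = ‖Δ‖ * r := mul_comm _ _
    gcongr
  have hkey := key_supp (μ := (volume : MeasureTheory.Measure (EuclideanSpace ℝ (Fin n))))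
    (fun y => π' y * (c * Real.exp (-‖x0 - y‖ ^ 2 / (2 * ν ^ 2)))) X m hm0
    (hInt x0) (fun y => mul_nonneg (hπ0 y) (hg0 x0 y).le) hXmeas hXm
    (by rw [← hp x0]; exact hppos x0) b hb (by linarith)
  rw [show (∫ y, π' y * (c * Real.exp (-‖x0 - y‖ ^ 2 / (2 * ν ^ 2)))) = p x0 from (hp x0).symm]
    at hkey
  have hp1 : p x1 = (∫ y, (π' y * (c * Real.exp (-‖x0 - y‖ ^ 2 / (2 * ν ^ 2))))
      * Real.exp (X y)) * Real.exp (A 1) := by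
    have h := hpt 1
    rw [hx1] at h
    simpa only [one_mul] using h
  have hpb : p (a • x0 + b • x1) = (∫ y, (π' y * (c * Real.exp (-‖x0 - y‖ ^ 2 / (2 * ν ^ 2))))
      * Real.exp (b * X y)) * Real.exp (A b) := by
    rw [hpoint]
    exact hpt b
  have hH1pos : 0 < ∫ y, (π' y * (c * Real.exp (-‖x0 - y‖ ^ 2 / (2 * ν ^ 2))))
      * Real.exp (X y) := by
    have h := hppos x1
    rw [hp1] at h
    rcases mul_pos_iff.1 h with ⟨h1, _⟩ | ⟨_, h2⟩
    · exact h1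
    · exact absurd h2 (not_lt.2 (Real.exp_pos _).le)
  have h1b : 0 ≤ 1 - b := by linarith
  have hr2 : r ^ 2 ≤ ν ^ 2 := by nlinarith
  have hm2 : m ^ 2 ≤ ‖Δ‖ ^ 2 / ν ^ 2 := by
    rw [hm_def, div_pow, mul_pow, div_le_div_iff₀ (by positivity) hν2]
    calc ‖Δ‖ ^ 2 * r ^ 2 * ν ^ 2 ≤ ‖Δ‖ ^ 2 * ν ^ 2 * ν ^ 2 := by gcongr
    _ = ‖Δ‖ ^ 2 * (ν ^ 2) ^ 2 := by ring
  have hAdiff : A b - A 1 * b = b * (1 - b) * ‖Δ‖ ^ 2 / (2 * ν ^ 2) := by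
    simp only [hA_def]
    field_simp
    ring
  have hA_ineq : A 1 * b ≤ A b - b * (1 - b) * m ^ 2 / 2 := by
    have h1 : b * (1 - b) * m ^ 2 / 2 ≤ b * (1 - b) * (‖Δ‖ ^ 2 / ν ^ 2) / 2 := by
      have := mul_nonneg hb h1b
      gcongr
    have h2 : b * (1 - b) * (‖Δ‖ ^ 2 / ν ^ 2) / 2 = b * (1 - b) * ‖Δ‖ ^ 2 / (2 * ν ^ 2) := by
      rw [div_eq_div_iff (by positivity) (by positivity)]
      field_simp
    linarith [hAdiff, h1, h2.le]
  have hstep : Real.exp (A 1 * b)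
      ≤ Real.exp (-(b * (1 - b) * m ^ 2 / 2)) * Real.exp (A b) := by
    rw [← Real.exp_add]
    exact Real.exp_le_exp.2 (by linarith)
  have hmain : p x0 ^ a * p x1 ^ b ≤ p (a • x0 + b • x1) := by
    rw [hp1, hpb, hab']
    calc p x0 ^ (1 - b) * ((∫ y, (π' y * (c * Real.exp (-‖x0 - y‖ ^ 2 / (2 * ν ^ 2))))
          * Real.exp (X y)) * Real.exp (A 1)) ^ b
        = p x0 ^ (1 - b) * (∫ y, (π' y * (c * Real.exp (-‖x0 - y‖ ^ 2 / (2 * ν ^ 2))))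
          * Real.exp (X y)) ^ b * Real.exp (A 1 * b) := by
          rw [Real.mul_rpow hH1pos.le (Real.exp_pos _).le, ← Real.exp_mul]
          ring
    _ ≤ p x0 ^ (1 - b) * (∫ y, (π' y * (c * Real.exp (-‖x0 - y‖ ^ 2 / (2 * ν ^ 2))))
          * Real.exp (X y)) ^ b
          * (Real.exp (-(b * (1 - b) * m ^ 2 / 2)) * Real.exp (A b)) := by
          exact mul_le_mul_of_nonneg_left hstep
            (mul_nonneg (Real.rpow_nonneg (hppos x0).le _) (Real.rpow_nonneg hH1pos.le _))
    _ = (p x0 ^ (1 - b) * (∫ y, (π' y * (c * Real.exp (-‖x0 - y‖ ^ 2 / (2 * ν ^ 2))))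
          * Real.exp (X y)) ^ b * Real.exp (-(b * (1 - b) * m ^ 2 / 2))) * Real.exp (A b) := by
          ring
    _ ≤ (∫ y, (π' y * (c * Real.exp (-‖x0 - y‖ ^ 2 / (2 * ν ^ 2))))
          * Real.exp (b * X y)) * Real.exp (A b) :=
          mul_le_mul_of_nonneg_right hkey (Real.exp_pos _).le
  have hlogs : a * Real.log (p x0) + b * Real.log (p x1)
      ≤ Real.log (p (a • x0 + b • x1)) := by
    have h1 : a * Real.log (p x0) + b * Real.log (p x1)
        = Real.log (p x0 ^ a * p x1 ^ b) := by
      rw [Real.log_mul (Real.rpow_pos_of_pos (hppos x0) a).ne'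
        (Real.rpow_pos_of_pos (hppos x1) b).ne',
        Real.log_rpow (hppos x0), Real.log_rpow (hppos x1)]
    rw [h1]
    exact (Real.log_le_log_iff (mul_pos (Real.rpow_pos_of_pos (hppos x0) a)
      (Real.rpow_pos_of_pos (hppos x1) b)) (hppos _)).2 hmain
  linarith
end

section
/- Let F : ℝⁿ × [t_min, t_max] → ℝ with F(x, t) = D(x) + α_t R(x, t), where D is C¹ and α_t ∇_x R(x, t) is L-Lipschitz in t uniformly in x. Then for f(x) := F(x, t_min), the update direction d(x, t) = -t ∇_x F(x, t) satisfies ⟨∇f(x), d(x, t)⟩ ≤ -t‖∇f(x)‖² + t‖∇f(x)‖·L·(t - t_min) for all t ∈ [t_min, t_max]; in particular, if ‖∇f(x)‖ > L(t - t_min) then d(x, t) is a descent direction for f at x. -/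
open scoped RealInnerProductSpace

lemma grad_add_smul {F : Type*} [NormedAddCommGroup F] [InnerProductSpace ℝ F]
    [CompleteSpace F] (g h : F → ℝ) (c : ℝ) (x : F)
    (hg : DifferentiableAt ℝ g x) (hh : DifferentiableAt ℝ h x) :
    gradient (fun z => g z + c * h z) x = gradient g x + c • gradient h x := by
  unfold gradient
  rw [fderiv_fun_add hg (hh.const_mul c), fderiv_const_mul hh c, map_add, map_smul]

theorem stmt_19 (n : ℕ)
    (tmin tmax L : ℝ) (htmin : 0 < tmin) (hle : tmin ≤ tmax) (hL : 0 ≤ L)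
    (D : EuclideanSpace ℝ (Fin n) → ℝ) (hD : ContDiff ℝ 1 D)
    (R : EuclideanSpace ℝ (Fin n) → ℝ → ℝ)
    (hR : ∀ t ∈ Set.Icc tmin tmax, ContDiff ℝ 1 (fun z => R z t))
    (α : ℝ → ℝ)
    (hLip : ∀ x, ∀ t ∈ Set.Icc tmin tmax, ∀ s ∈ Set.Icc tmin tmax,
      ‖α t • gradient (fun z => R z t) x - α s • gradient (fun z => R z s) x‖ ≤
        L * |t - s|)
    (f : EuclideanSpace ℝ (Fin n) → ℝ)
    (hf : ∀ x, f x = D x + α tmin * R x tmin)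
    (d : EuclideanSpace ℝ (Fin n) → ℝ → EuclideanSpace ℝ (Fin n))
    (hd : ∀ x t, d x t = -t • gradient (fun z => D z + α t * R z t) x) :
    ∀ x, ∀ t ∈ Set.Icc tmin tmax,
      (⟪gradient f x, d x t⟫ ≤
        -t * ‖gradient f x‖ ^ 2 + t * ‖gradient f x‖ * (L * (t - tmin))) ∧
      (L * (t - tmin) < ‖gradient f x‖ → ⟪gradient f x, d x t⟫ < 0) := by
  intro x t ht
  have htmem : tmin ∈ Set.Icc tmin tmax := ⟨le_refl _, hle⟩
  have hDd : DifferentiableAt ℝ D x := (hD.differentiable one_ne_zero) x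
  have hgf : gradient f x = gradient D x + α tmin • gradient (fun z => R z tmin) x := by
    have : f = fun z => D z + α tmin * R z tmin := funext hf
    rw [this, grad_add_smul D _ _ x hDd (((hR tmin htmem).differentiable one_ne_zero) x)]
  have hgt : gradient (fun z => D z + α t * R z t) x
      = gradient D x + α t • gradient (fun z => R z t) x :=
    grad_add_smul D _ _ x hDd (((hR t ht).differentiable one_ne_zero) x)
  set g := gradient f x with hg
  have hdiff : gradient (fun z => D z + α t * R z t) x - g
      = α t • gradient (fun z => R z t) x - α tmin • gradient (fun z => R z tmin) x := by
    rw [hgt, hgf]; abel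
  have hnorm : ‖gradient (fun z => D z + α t * R z t) x - g‖ ≤ L * (t - tmin) := by
    rw [hdiff]
    have := hLip x t ht tmin htmem
    rwa [abs_of_nonneg (by linarith [ht.1] : (0:ℝ) ≤ t - tmin)] at this
  have ht0 : 0 ≤ t := le_trans htmin.le ht.1
  have key : ⟪g, d x t⟫ ≤ -t * ‖g‖ ^ 2 + t * ‖g‖ * (L * (t - tmin)) := by
    rw [hd]
    have : ⟪g, -t • gradient (fun z => D z + α t * R z t) x⟫
        = -t * (⟪g, g⟫ + ⟪g, gradient (fun z => D z + α t * R z t) x - g⟫) := by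
      rw [real_inner_smul_right, inner_sub_right]; ring
    rw [this, real_inner_self_eq_norm_sq]
    have hcs : ⟪g, gradient (fun z => D z + α t * R z t) x - g⟫ ≥ -(‖g‖ * (L * (t - tmin))) := by
      have h1 := abs_real_inner_le_norm g (gradient (fun z => D z + α t * R z t) x - g)
      have h2 : ‖g‖ * ‖gradient (fun z => D z + α t * R z t) x - g‖ ≤ ‖g‖ * (L * (t - tmin)) :=
        mul_le_mul_of_nonneg_left hnorm (norm_nonneg _)
      have := neg_abs_le ⟪g, gradient (fun z => D z + α t * R z t) x - g⟫
      linarith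
    nlinarith [sq_nonneg ‖g‖]
  refine ⟨key, fun hlt => ?_⟩
  have hg0 : 0 < ‖g‖ := lt_of_le_of_lt (mul_nonneg hL (by linarith [ht.1])) hlt
  have htpos : 0 < t := lt_of_lt_of_le htmin ht.1
  calc ⟪g, d x t⟫ ≤ -t * ‖g‖ ^ 2 + t * ‖g‖ * (L * (t - tmin)) := key
    _ < 0 := by nlinarith [mul_pos (mul_pos htpos hg0) (sub_pos.mpr hlt)]
end
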